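/- Let Φ = Σ_{k=1}^∞ λ_k u_k ∧ v_k be a canonical form of a normalized Φ ∈ h∧h, let B = Σ_{k=1}^∞ λ_k c_{k,↓} c_{k,↑}, and let Ψ_M = (B*)^M Ω. Then for every M ≥ 1, every k ∈ ℕ and σ ∈ {↑,↓}: c_{k,σ} Ψ_M = ±_σ M·λ_k·c*_{k,σ̄} Ψ_{M−1}. -/

import Mathlib

/- Setting: `H` is the one-particle Hilbert space `h`, `F` is the fermionic Fock space over
`h` (carrying annihilation operators `an f = c(f)` satisfying the CAR, with adjoints the
creation operators `c*(f)`, and vacuum `Ω`), and `T` is the two-particle space `h ⊗ h`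
(realized by a bilinear map `tp`, with the antisymmetric tensors `h ∧ h` inside it). -/

open scoped ComplexOrder

notation "⟪" x ", " y "⟫_ℂ" => @inner ℂ _ _ x y
open ContinuousLinearMap

noncomputable section

/-- A family of annihilation operators `an f = c(f)` on a Fock space `F` satisfying the
canonical anticommutation relations `{c(f), c(g)} = 0` and `{c(f), c*(g)} = ⟪f, g⟫ • 1`. -/
def SatisfiesCAR {H F : Type*} [NormedAddCommGroup H] [InnerProductSpace ℂ H]
    [NormedAddCommGroup F] [InnerProductSpace ℂ F] [CompleteSpace F]
    (an : H → F →L[ℂ] F) : Prop :=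
  (∀ f g : H, an f ∘L an g + an g ∘L an f = 0) ∧
  (∀ f g : H, an f ∘L adjoint (an g) + adjoint (an g) ∘L an f = ⟪f, g⟫_ℂ • (1 : F →L[ℂ] F))

/-- The action of `B = ∑ₖ λₖ c_{k,↓} c_{k,↑}` (where `c_{k,↑} = an (u k)` and
`c_{k,↓} = an (v k)`) on a vector of the Fock space. -/
def applyB {H F : Type*} [NormedAddCommGroup F] [InnerProductSpace ℂ F]
    (an : H → F →L[ℂ] F) (u v : ℕ → H) (lam : ℕ → ℝ) (ψ : F) : F :=
  ∑' k : ℕ, (lam k : ℂ) • an (v k) (an (u k) ψ)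

/-- The action of `B* = ∑ₖ λₖ c*_{k,↑} c*_{k,↓}` on a vector of the Fock space. -/
def applyBd {H F : Type*} [NormedAddCommGroup F] [InnerProductSpace ℂ F] [CompleteSpace F]
    (an : H → F →L[ℂ] F) (u v : ℕ → H) (lam : ℕ → ℝ) (ψ : F) : F :=
  ∑' k : ℕ, (lam k : ℂ) • adjoint (an (u k)) (adjoint (an (v k)) ψ)

/-- `ψ` belongs to the `N`-particle sector `⋀^N h` of the Fock space, i.e. `ψ` is an
eigenvector of the number operator `𝒩 = ∑ₖ (c*_{k,↑} c_{k,↑} + c*_{k,↓} c_{k,↓})` with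
eigenvalue `N` (here the `u k` and `v k` jointly form an orthonormal basis of `h`). -/
def InSector {H F : Type*} [NormedAddCommGroup F] [InnerProductSpace ℂ F] [CompleteSpace F]
    (an : H → F →L[ℂ] F) (u v : ℕ → H) (N : ℕ) (ψ : F) : Prop :=
  ∑' k : ℕ, (adjoint (an (u k)) (an (u k) ψ) + adjoint (an (v k)) (an (v k) ψ)) = (N : ℂ) • ψ

/-- `Ω` is the (normalized) vacuum vector: it is annihilated by every `an f`. -/
def IsVacuum {H F : Type*} [NormedAddCommGroup F] [InnerProductSpace ℂ F]
    (an : H → F →L[ℂ] F) (Ω : F) : Prop :=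
  ‖Ω‖ = 1 ∧ ∀ f : H, an f Ω = 0

/-- The trial states `Ψ_M = (B*)^M Ω`. -/
def PsiM {H F : Type*} [NormedAddCommGroup F] [InnerProductSpace ℂ F] [CompleteSpace F]
    (an : H → F →L[ℂ] F) (u v : ℕ → H) (lam : ℕ → ℝ) (Ω : F) : ℕ → F
  | 0 => Ω
  | M + 1 => applyBd an u v lam (PsiM an u v lam Ω M)

/-- `tp` realizes the Hilbert space `T` as the Hilbert tensor product `h ⊗ h`: inner
products of elementary tensors multiply, and elementary tensors span a dense subspace. -/
def IsHilbertTensorProduct {H T : Type*} [NormedAddCommGroup H] [InnerProductSpace ℂ H]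
    [NormedAddCommGroup T] [InnerProductSpace ℂ T]
    (tp : H →ₗ[ℂ] H →ₗ[ℂ] T) : Prop :=
  (∀ x y z w : H, ⟪tp x y, tp z w⟫_ℂ = ⟪x, z⟫_ℂ * ⟪y, w⟫_ℂ) ∧
  (Submodule.span ℂ {t : T | ∃ x y : H, t = tp x y}).topologicalClosure = ⊤

/-- The elementary antisymmetric tensor `x ∧ y = (x ⊗ y - y ⊗ x)/√2`. -/
def wedgeVec {H T : Type*} [NormedAddCommGroup H] [InnerProductSpace ℂ H]
    [NormedAddCommGroup T] [InnerProductSpace ℂ T]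
    (tp : H →ₗ[ℂ] H →ₗ[ℂ] T) (x y : H) : T :=
  (((Real.sqrt 2 : ℝ) : ℂ))⁻¹ • (tp x y - tp y x)

/-- `Φ = ∑ₖ λₖ • (u k) ∧ (v k)` is a canonical form of `Φ ∈ h ∧ h`: the sequences
`(u k)` and `(v k)` are jointly orthonormal and jointly span `h`, `λₖ ≥ 0` and
`∑ₖ λₖ² = 1`. -/
def CanonicalWedgeForm {H T : Type*} [NormedAddCommGroup H] [InnerProductSpace ℂ H]
    [NormedAddCommGroup T] [InnerProductSpace ℂ T]
    (tp : H →ₗ[ℂ] H →ₗ[ℂ] T) (u v : ℕ → H) (lam : ℕ → ℝ) (Φ : T) : Prop :=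
  Orthonormal ℂ (Sum.elim u v) ∧
  (Submodule.span ℂ (Set.range u ∪ Set.range v)).topologicalClosure = ⊤ ∧
  (∀ k, 0 ≤ lam k) ∧ (∑' k : ℕ, lam k ^ 2) = 1 ∧
  Φ = ∑' k : ℕ, (lam k : ℂ) • wedgeVec tp (u k) (v k)

/-- `G` is the two-body operator `γ₂^Ψ` associated with the state `Ψ`, characterized by
`⟪φ₁ ⊗ φ₂, G (ψ₁ ⊗ ψ₂)⟫ = ⟪Ψ, c*(ψ₁) c*(ψ₂) c(φ₂) c(φ₁) Ψ⟫`. -/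
def IsTwoBodyOp {H F T : Type*} [NormedAddCommGroup H] [InnerProductSpace ℂ H]
    [NormedAddCommGroup F] [InnerProductSpace ℂ F] [CompleteSpace F]
    [NormedAddCommGroup T] [InnerProductSpace ℂ T]
    (tp : H →ₗ[ℂ] H →ₗ[ℂ] T) (an : H → F →L[ℂ] F) (Ψ : F) (G : T →L[ℂ] T) : Prop :=
  ∀ p q r s : H,
    ⟪tp p q, G (tp r s)⟫_ℂ = ⟪Ψ, adjoint (an r) (adjoint (an s) (an q (an p Ψ)))⟫_ℂ



section MyAux
set_option linter.unusedVariables false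
set_option linter.unusedSectionVars false
variable {H F : Type*} [NormedAddCommGroup H] [InnerProductSpace ℂ H]
  [NormedAddCommGroup F] [InnerProductSpace ℂ F] [CompleteSpace F]
  {an : H → F →L[ℂ] F} {u v : ℕ → H} {lam : ℕ → ℝ}


lemma my_an_an (h : SatisfiesCAR an) (f g : H) (ψ : F) :
    an f (an g ψ) = -(an g (an f ψ)) := by
  have h0 := congrArg (fun T : F →L[ℂ] F => T ψ) (h.1 f g)
  simp only [ContinuousLinearMap.add_apply, ContinuousLinearMap.comp_apply,
    ContinuousLinearMap.zero_apply] at h0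
  exact eq_neg_of_add_eq_zero_left h0

lemma my_an_ad (h : SatisfiesCAR an) (f g : H) (ψ : F) :
    an f (adjoint (an g) ψ) = ⟪f, g⟫_ℂ • ψ - adjoint (an g) (an f ψ) := by
  have h0 := congrArg (fun T : F →L[ℂ] F => T ψ) (h.2 f g)
  simp only [ContinuousLinearMap.add_apply, ContinuousLinearMap.comp_apply,
    ContinuousLinearMap.smul_apply, ContinuousLinearMap.one_apply] at h0
  exact eq_sub_of_add_eq h0

/-- orthogonal version -/
lemma my_an_ad' (h : SatisfiesCAR an) {f g : H} (hfg : ⟪f, g⟫_ℂ = 0) (ψ : F) :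
    an f (adjoint (an g) ψ) = -(adjoint (an g) (an f ψ)) := by
  rw [my_an_ad h, hfg, zero_smul, zero_sub]

lemma my_ad_ad (h : SatisfiesCAR an) (f g : H) (ψ : F) :
    adjoint (an f) (adjoint (an g) ψ) = -(adjoint (an g) (adjoint (an f) ψ)) := by
  have h1 := congrArg (fun T : F →L[ℂ] F => adjoint T) (h.1 g f)
  simp only [map_add, adjoint_comp, map_zero] at h1
  have h0 := congrArg (fun T : F →L[ℂ] F => T ψ) h1
  simp only [ContinuousLinearMap.add_apply, ContinuousLinearMap.comp_apply,
    ContinuousLinearMap.zero_apply] at h0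
  exact eq_neg_of_add_eq_zero_left h0

lemma my_norm_sq (h : SatisfiesCAR an) (f : H) (ψ : F) :
    ‖an f ψ‖ ^ 2 + ‖adjoint (an f) ψ‖ ^ 2 = ‖f‖ ^ 2 * ‖ψ‖ ^ 2 := by
  have h0 := congrArg (fun T : F →L[ℂ] F => ⟪ψ, T ψ⟫_ℂ) (h.2 f f)
  simp only [ContinuousLinearMap.add_apply, ContinuousLinearMap.comp_apply,
    ContinuousLinearMap.smul_apply, ContinuousLinearMap.one_apply] at h0
  have e1 : ⟪ψ, an f (adjoint (an f) ψ)⟫_ℂ = ((‖adjoint (an f) ψ‖ : ℂ)) ^ 2 := by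
    rw [← adjoint_inner_left (an f) (adjoint (an f) ψ) ψ]
    exact inner_self_eq_norm_sq_to_K _
  have e2 : ⟪ψ, adjoint (an f) (an f ψ)⟫_ℂ = ((‖an f ψ‖ : ℂ)) ^ 2 := by
    rw [adjoint_inner_right]
    exact inner_self_eq_norm_sq_to_K _
  rw [inner_add_right, inner_smul_right, e1, e2, inner_self_eq_norm_sq_to_K,
    inner_self_eq_norm_sq_to_K] at h0
  norm_cast at h0
  have h2 := RCLike.ofReal_injective (K := ℂ) h0
  have h3 : ‖adjoint (an f) ψ‖ ^ 2 + ‖an f ψ‖ ^ 2 = ‖f‖ ^ 2 * ‖ψ‖ ^ 2 := h2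
  linarith

lemma my_norm_an_le (h : SatisfiesCAR an) (f : H) (ψ : F) :
    ‖an f ψ‖ ≤ ‖f‖ * ‖ψ‖ := by
  have h1 := my_norm_sq h f ψ
  nlinarith [norm_nonneg (an f ψ), norm_nonneg (adjoint (an f) ψ),
    mul_nonneg (norm_nonneg f) (norm_nonneg ψ), sq_nonneg (‖an f ψ‖ - ‖f‖ * ‖ψ‖),
    sq_nonneg (‖an f ψ‖ + ‖f‖ * ‖ψ‖)]

lemma my_norm_ad_le (h : SatisfiesCAR an) (f : H) (ψ : F) :
    ‖adjoint (an f) ψ‖ ≤ ‖f‖ * ‖ψ‖ := by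
  have h1 := my_norm_sq h f ψ
  nlinarith [norm_nonneg (an f ψ), norm_nonneg (adjoint (an f) ψ),
    mul_nonneg (norm_nonneg f) (norm_nonneg ψ), sq_nonneg (‖adjoint (an f) ψ‖ - ‖f‖ * ‖ψ‖),
    sq_nonneg (‖adjoint (an f) ψ‖ + ‖f‖ * ‖ψ‖)]


lemma my_huu (hon : Orthonormal ℂ (Sum.elim u v)) (j k : ℕ) :
    ⟪u j, u k⟫_ℂ = if j = k then 1 else 0 := by
  have := orthonormal_iff_ite.mp hon (Sum.inl j) (Sum.inl k)
  simpa using this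

lemma my_hvv (hon : Orthonormal ℂ (Sum.elim u v)) (j k : ℕ) :
    ⟪v j, v k⟫_ℂ = if j = k then 1 else 0 := by
  have := orthonormal_iff_ite.mp hon (Sum.inr j) (Sum.inr k)
  simpa using this

lemma my_huv (hon : Orthonormal ℂ (Sum.elim u v)) (j k : ℕ) : ⟪u j, v k⟫_ℂ = 0 := by
  have := orthonormal_iff_ite.mp hon (Sum.inl j) (Sum.inr k)
  simpa using this

lemma my_hvu (hon : Orthonormal ℂ (Sum.elim u v)) (j k : ℕ) : ⟪v j, u k⟫_ℂ = 0 := by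
  have := orthonormal_iff_ite.mp hon (Sum.inr j) (Sum.inl k)
  simpa using this

lemma my_nu (hon : Orthonormal ℂ (Sum.elim u v)) (k : ℕ) : ‖u k‖ = 1 := hon.1 (Sum.inl k)

lemma my_nv (hon : Orthonormal ℂ (Sum.elim u v)) (k : ℕ) : ‖v k‖ = 1 := hon.1 (Sum.inr k)



lemma my_cross (h : SatisfiesCAR an) (hon : Orthonormal ℂ (Sum.elim u v))
    {j k : ℕ} (hjk : j ≠ k) (ψ : F) :
    ⟪adjoint (an (u j)) (adjoint (an (v j)) ψ), adjoint (an (u k)) (adjoint (an (v k)) ψ)⟫_ℂ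
      = ⟪an (v k) (an (u k) ψ), an (v j) (an (u j) ψ)⟫_ℂ := by
  have huu0 : ⟪u j, u k⟫_ℂ = 0 := by rw [my_huu hon]; simp [hjk]
  have hvv0 : ⟪v j, v k⟫_ℂ = 0 := by rw [my_hvv hon]; simp [hjk]
  rw [adjoint_inner_left]
  have s2 : an (u j) (adjoint (an (u k)) (adjoint (an (v k)) ψ))
      = adjoint (an (u k)) (adjoint (an (v k)) (an (u j) ψ)) := by
    rw [my_an_ad' h huu0, my_an_ad' h (my_huv hon j k), map_neg, neg_neg]
  rw [s2, adjoint_inner_right, my_an_ad' h (my_huv hon k j), inner_neg_left,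
    adjoint_inner_left, my_an_ad' h hvv0, inner_neg_right, neg_neg, adjoint_inner_right]

lemma my_diag (h : SatisfiesCAR an) (hon : Orthonormal ℂ (Sum.elim u v)) (k : ℕ) (ψ : F) :
    ‖adjoint (an (u k)) (adjoint (an (v k)) ψ)‖ ^ 2 + ‖an (u k) ψ‖ ^ 2 + ‖an (v k) ψ‖ ^ 2
      = ‖an (v k) (an (u k) ψ)‖ ^ 2 + ‖ψ‖ ^ 2 := by
  have h1 := my_norm_sq h (u k) (adjoint (an (v k)) ψ)
  have h2 := my_norm_sq h (v k) ψ
  have h4 := my_norm_sq h (v k) (an (u k) ψ)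
  have h3 : an (u k) (adjoint (an (v k)) ψ) = -(adjoint (an (v k)) (an (u k) ψ)) :=
    my_an_ad' h (my_huv hon k k) ψ
  rw [h3, norm_neg, my_nu hon] at h1
  rw [my_nv hon] at h2 h4
  nlinarith [h1, h2, h4]

lemma my_B_bound {lam : ℕ → ℝ} (h : SatisfiesCAR an) (hon : Orthonormal ℂ (Sum.elim u v))
    (hl0 : ∀ i, 0 ≤ lam i) (ψ : F) (t : Finset ℕ) :
    ‖∑ k ∈ t, (lam k : ℂ) • an (v k) (an (u k) ψ)‖ ^ 2
      ≤ (∑ k ∈ t, lam k ^ 2) * (∑ k ∈ t, ‖an (u k) ψ‖ ^ 2) := by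
  set x := ∑ k ∈ t, (lam k : ℂ) • an (v k) (an (u k) ψ) with hx
  have key : ‖x‖ ^ 2 ≤ ‖x‖ * ∑ k ∈ t, lam k * ‖an (u k) ψ‖ := by
    have e0 : (⟪x, x⟫_ℂ) = ∑ k ∈ t, (lam k : ℂ) * ⟪adjoint (an (v k)) x, an (u k) ψ⟫_ℂ := by
      rw [hx, inner_sum]
      refine Finset.sum_congr rfl fun k hk => ?_
      rw [inner_smul_right, adjoint_inner_left]
    have e1 : ‖x‖ ^ 2 = ‖⟪x, x⟫_ℂ‖ := by
      rw [inner_self_eq_norm_sq_to_K]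
      simp [norm_pow]
    calc ‖x‖ ^ 2 = ‖⟪x, x⟫_ℂ‖ := e1
      _ = ‖∑ k ∈ t, (lam k : ℂ) * ⟪adjoint (an (v k)) x, an (u k) ψ⟫_ℂ‖ := by rw [e0]
      _ ≤ ∑ k ∈ t, ‖(lam k : ℂ) * ⟪adjoint (an (v k)) x, an (u k) ψ⟫_ℂ‖ :=
          norm_sum_le _ _
      _ ≤ ∑ k ∈ t, lam k * (‖x‖ * ‖an (u k) ψ‖) := by
          refine Finset.sum_le_sum fun k hk => ?_
          rw [norm_mul, Complex.norm_real, Real.norm_eq_abs, abs_of_nonneg (hl0 k)]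
          refine mul_le_mul_of_nonneg_left ?_ (hl0 k)
          calc ‖⟪adjoint (an (v k)) x, an (u k) ψ⟫_ℂ‖
              ≤ ‖adjoint (an (v k)) x‖ * ‖an (u k) ψ‖ := norm_inner_le_norm _ _
            _ ≤ ‖x‖ * ‖an (u k) ψ‖ := by
                refine mul_le_mul_of_nonneg_right ?_ (norm_nonneg _)
                have := my_norm_ad_le h (v k) x
                rwa [my_nv hon, one_mul] at this
      _ = ‖x‖ * ∑ k ∈ t, lam k * ‖an (u k) ψ‖ := by
          rw [Finset.mul_sum]; exact Finset.sum_congr rfl fun k _ => by ring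
  have cs : (∑ k ∈ t, lam k * ‖an (u k) ψ‖) ^ 2
      ≤ (∑ k ∈ t, lam k ^ 2) * (∑ k ∈ t, ‖an (u k) ψ‖ ^ 2) :=
    Finset.sum_mul_sq_le_sq_mul_sq t _ _
  have hS : 0 ≤ ∑ k ∈ t, lam k * ‖an (u k) ψ‖ :=
    Finset.sum_nonneg fun k _ => mul_nonneg (hl0 k) (norm_nonneg _)
  nlinarith [norm_nonneg x, key, cs, hS]



lemma my_Bd_bound (h : SatisfiesCAR an) (hon : Orthonormal ℂ (Sum.elim u v))
    (hl0 : ∀ i, 0 ≤ lam i) (ψ : F) (t : Finset ℕ) :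
    ‖∑ k ∈ t, (lam k : ℂ) • adjoint (an (u k)) (adjoint (an (v k)) ψ)‖ ^ 2
      ≤ ‖∑ k ∈ t, (lam k : ℂ) • an (v k) (an (u k) ψ)‖ ^ 2 + (∑ k ∈ t, lam k ^ 2) * ‖ψ‖ ^ 2 := by
  classical
  set y := ∑ k ∈ t, (lam k : ℂ) • adjoint (an (u k)) (adjoint (an (v k)) ψ) with hy
  set x := ∑ k ∈ t, (lam k : ℂ) • an (v k) (an (u k) ψ) with hx
  set c : ℕ → ℝ := fun j => ‖ψ‖ ^ 2 - ‖an (u j) ψ‖ ^ 2 - ‖an (v j) ψ‖ ^ 2 with hc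
  -- diagonal identity in ℂ
  have diagC : ∀ j : ℕ,
      ⟪adjoint (an (u j)) (adjoint (an (v j)) ψ), adjoint (an (u j)) (adjoint (an (v j)) ψ)⟫_ℂ
        = ⟪an (v j) (an (u j) ψ), an (v j) (an (u j) ψ)⟫_ℂ + ((c j : ℝ) : ℂ) := by
    intro j
    rw [inner_self_eq_norm_sq_to_K, inner_self_eq_norm_sq_to_K]
    have hd := my_diag h hon j ψ
    have : ‖adjoint (an (u j)) (adjoint (an (v j)) ψ)‖ ^ 2
        = ‖an (v j) (an (u j) ψ)‖ ^ 2 + c j := by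
      simp only [hc]; linarith
    rw [← RCLike.ofReal_pow, ← RCLike.ofReal_pow, this, RCLike.ofReal_add]
    rfl
  have expandY : ⟪y, y⟫_ℂ = ∑ j ∈ t, ∑ k ∈ t, ((lam j : ℂ) * (lam k : ℂ))
      * ⟪adjoint (an (u j)) (adjoint (an (v j)) ψ),
          adjoint (an (u k)) (adjoint (an (v k)) ψ)⟫_ℂ := by
    rw [hy, sum_inner]
    refine Finset.sum_congr rfl fun j hj => ?_
    rw [inner_sum]
    refine Finset.sum_congr rfl fun k hk => ?_
    rw [inner_smul_left, inner_smul_right, Complex.conj_ofReal]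
    ring
  have expandX : ⟪x, x⟫_ℂ = ∑ j ∈ t, ∑ k ∈ t, ((lam j : ℂ) * (lam k : ℂ))
      * ⟪an (v j) (an (u j) ψ), an (v k) (an (u k) ψ)⟫_ℂ := by
    rw [hx, sum_inner]
    refine Finset.sum_congr rfl fun j hj => ?_
    rw [inner_sum]
    refine Finset.sum_congr rfl fun k hk => ?_
    rw [inner_smul_left, inner_smul_right, Complex.conj_ofReal]
    ring
  have stepA : ⟪y, y⟫_ℂ = ⟪x, x⟫_ℂ + ((∑ j ∈ t, lam j ^ 2 * c j : ℝ) : ℂ) := by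
    rw [expandY]
    have term : ∀ j ∈ t, ∀ k ∈ t, ((lam j : ℂ) * (lam k : ℂ))
        * ⟪adjoint (an (u j)) (adjoint (an (v j)) ψ),
            adjoint (an (u k)) (adjoint (an (v k)) ψ)⟫_ℂ
        = ((lam j : ℂ) * (lam k : ℂ)) * ⟪an (v k) (an (u k) ψ), an (v j) (an (u j) ψ)⟫_ℂ
          + (if j = k then ((lam j ^ 2 * c j : ℝ) : ℂ) else 0) := by
      intro j _ k _
      by_cases hjk : j = k
      · subst hjk
        rw [diagC j]
        simp only [if_pos rfl]
        push_cast
        ring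
      · rw [my_cross h hon hjk]
        simp [hjk]
    rw [Finset.sum_congr rfl fun j hj => Finset.sum_congr rfl fun k hk => term j hj k hk]
    rw [Finset.sum_congr rfl fun j (hj : j ∈ t) => Finset.sum_add_distrib]
    rw [Finset.sum_add_distrib]
    congr 1
    · rw [expandX, Finset.sum_comm]
      refine Finset.sum_congr rfl fun k hk => Finset.sum_congr rfl fun j hj => ?_
      ring
    · rw [show ((∑ j ∈ t, lam j ^ 2 * c j : ℝ) : ℂ) = ∑ j ∈ t, ((lam j ^ 2 * c j : ℝ) : ℂ) by
        push_cast; ring]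
      refine Finset.sum_congr rfl fun j hj => ?_
      rw [Finset.sum_ite_eq t j fun _ => ((lam j ^ 2 * c j : ℝ) : ℂ), if_pos hj]
  -- pass to real parts
  have hyx : ‖y‖ ^ 2 = ‖x‖ ^ 2 + ∑ j ∈ t, lam j ^ 2 * c j := by
    have := stepA
    rw [inner_self_eq_norm_sq_to_K, inner_self_eq_norm_sq_to_K] at this
    norm_cast at this
    have h2 := congrArg (RCLike.re (K := ℂ)) this
    simp only [map_add, RCLike.ofReal_re] at h2
    exact h2
  rw [hyx]
  have hb : ∑ j ∈ t, lam j ^ 2 * c j ≤ (∑ j ∈ t, lam j ^ 2) * ‖ψ‖ ^ 2 := by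
    rw [Finset.sum_mul]
    refine Finset.sum_le_sum fun j hj => ?_
    have : c j ≤ ‖ψ‖ ^ 2 := by simp only [hc]; nlinarith [sq_nonneg ‖an (u j) ψ‖, sq_nonneg ‖an (v j) ψ‖]
    exact mul_le_mul_of_nonneg_left this (sq_nonneg _)
  linarith


lemma my_summable_Bd (h : SatisfiesCAR an) (hon : Orthonormal ℂ (Sum.elim u v))
    (hl0 : ∀ i, 0 ≤ lam i) (hlam2 : Summable (fun k => lam k ^ 2)) (ψ : F)
    (hψ : Summable fun k => ‖an (u k) ψ‖ ^ 2) :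
    Summable (fun k => (lam k : ℂ) • adjoint (an (u k)) (adjoint (an (v k)) ψ)) := by
  rw [summable_iff_vanishing_norm]
  intro ε hε
  have htn : 0 ≤ ∑' k, ‖an (u k) ψ‖ ^ 2 := tsum_nonneg fun k => sq_nonneg _
  set C := (∑' k, ‖an (u k) ψ‖ ^ 2) + ‖ψ‖ ^ 2 + 1 with hCdef
  have hC0 : 0 < C := by positivity
  obtain ⟨s, hs⟩ := summable_iff_vanishing_norm.mp hlam2 (ε ^ 2 / C) (by positivity)
  refine ⟨s, fun t ht => ?_⟩
  have hsum2 : ∑ k ∈ t, lam k ^ 2 < ε ^ 2 / C := by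
    have h5 := hs t ht
    rw [Real.norm_eq_abs] at h5
    exact lt_of_le_of_lt (le_abs_self _) h5
  have h1 := my_Bd_bound h hon hl0 ψ t
  have h2 := my_B_bound h hon hl0 ψ t
  have h3 : ∑ k ∈ t, ‖an (u k) ψ‖ ^ 2 ≤ ∑' k, ‖an (u k) ψ‖ ^ 2 :=
    Summable.sum_le_tsum t (fun k _ => sq_nonneg _) hψ
  have h4 : 0 ≤ ∑ k ∈ t, lam k ^ 2 := Finset.sum_nonneg fun k _ => sq_nonneg _
  have e1 : ‖∑ k ∈ t, (lam k : ℂ) • adjoint (an (u k)) (adjoint (an (v k)) ψ)‖ ^ 2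
      ≤ (∑ k ∈ t, lam k ^ 2) * C := by
    have h6 : (∑ k ∈ t, lam k ^ 2) * (∑ k ∈ t, ‖an (u k) ψ‖ ^ 2)
        ≤ (∑ k ∈ t, lam k ^ 2) * (∑' k, ‖an (u k) ψ‖ ^ 2) :=
      mul_le_mul_of_nonneg_left h3 h4
    nlinarith [sq_nonneg ‖ψ‖]
  have e2 : (∑ k ∈ t, lam k ^ 2) * C < ε ^ 2 := by
    have := mul_lt_mul_of_pos_right hsum2 hC0
    rwa [div_mul_cancel₀ _ (ne_of_gt hC0)] at this
  have e3 : ‖∑ k ∈ t, (lam k : ℂ) • adjoint (an (u k)) (adjoint (an (v k)) ψ)‖ ^ 2 < ε ^ 2 :=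
    lt_of_le_of_lt e1 e2
  exact lt_of_pow_lt_pow_left₀ 2 hε.le e3

lemma my_an_u_applyBd (h : SatisfiesCAR an) (hon : Orthonormal ℂ (Sum.elim u v)) (k : ℕ) (ψ : F)
    (h1 : Summable (fun j => (lam j : ℂ) • adjoint (an (u j)) (adjoint (an (v j)) ψ)))
    (h2 : Summable (fun j => (lam j : ℂ) • adjoint (an (u j)) (adjoint (an (v j)) (an (u k) ψ)))) :
    an (u k) (applyBd an u v lam ψ)
      = (lam k : ℂ) • adjoint (an (v k)) ψ + applyBd an u v lam (an (u k) ψ) := by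
  rw [applyBd, ContinuousLinearMap.map_tsum _ h1]
  have term : ∀ j, an (u k) ((lam j : ℂ) • adjoint (an (u j)) (adjoint (an (v j)) ψ))
      = (if j = k then (lam k : ℂ) • adjoint (an (v k)) ψ else 0)
        + (lam j : ℂ) • adjoint (an (u j)) (adjoint (an (v j)) (an (u k) ψ)) := by
    intro j
    rw [map_smul, my_an_ad h (u k) (u j), my_an_ad' h (my_huv hon k j), my_huu hon k j]
    by_cases hjk : j = k
    · subst hjk
      rw [if_pos rfl, if_pos rfl, map_neg, one_smul, sub_neg_eq_add, smul_add]
    · rw [if_neg (Ne.symm hjk), if_neg hjk, zero_smul, zero_sub, map_neg, neg_neg, zero_add]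
  rw [tsum_congr term, Summable.tsum_add (summable_of_ne_finset_zero (s := {k})
    (fun j hj => if_neg (by simpa using hj))) h2, tsum_ite_eq k (fun _ => (lam k : ℂ) • adjoint (an (v k)) ψ)]
  rfl


lemma my_an_v_applyBd (h : SatisfiesCAR an) (hon : Orthonormal ℂ (Sum.elim u v)) (k : ℕ) (ψ : F)
    (h1 : Summable (fun j => (lam j : ℂ) • adjoint (an (u j)) (adjoint (an (v j)) ψ)))
    (h2 : Summable (fun j => (lam j : ℂ) • adjoint (an (u j)) (adjoint (an (v j)) (an (v k) ψ)))) :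
    an (v k) (applyBd an u v lam ψ)
      = -((lam k : ℂ) • adjoint (an (u k)) ψ) + applyBd an u v lam (an (v k) ψ) := by
  rw [applyBd, ContinuousLinearMap.map_tsum _ h1]
  have term : ∀ j, an (v k) ((lam j : ℂ) • adjoint (an (u j)) (adjoint (an (v j)) ψ))
      = (if j = k then -((lam k : ℂ) • adjoint (an (u k)) ψ) else 0)
        + (lam j : ℂ) • adjoint (an (u j)) (adjoint (an (v j)) (an (v k) ψ)) := by
    intro j
    rw [map_smul, my_an_ad' h (my_hvu hon k j), my_an_ad h (v k) (v j), my_hvv hon k j]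
    by_cases hjk : j = k
    · subst hjk
      rw [if_pos rfl, if_pos rfl, one_smul, map_sub, neg_sub, smul_sub, sub_eq_neg_add]
    · rw [if_neg (Ne.symm hjk), if_neg hjk, zero_smul, zero_sub, map_neg, neg_neg, zero_add]
  rw [tsum_congr term, Summable.tsum_add (summable_of_ne_finset_zero (s := {k})
    (fun j hj => if_neg (by simpa using hj))) h2,
    tsum_ite_eq k (fun _ => -((lam k : ℂ) • adjoint (an (u k)) ψ))]
  rfl

lemma my_term_comm (h : SatisfiesCAR an) (c : ℂ) (f : H) (j : ℕ) (ψ : F) :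
    (lam j : ℂ) • adjoint (an (u j)) (adjoint (an (v j)) (c • adjoint (an f) ψ))
      = (c • adjoint (an f) : F →L[ℂ] F) ((lam j : ℂ) • adjoint (an (u j)) (adjoint (an (v j)) ψ)) := by
  simp only [map_smul, my_ad_ad h (v j) f ψ, map_neg, my_ad_ad h (u j) f, neg_neg,
    ContinuousLinearMap.smul_apply, smul_smul]
  try congr 1
  try ring

lemma my_applyBd_smul_ad (h : SatisfiesCAR an) (c : ℂ) (f : H) (ψ : F)
    (h1 : Summable (fun j => (lam j : ℂ) • adjoint (an (u j)) (adjoint (an (v j)) ψ))) :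
    applyBd an u v lam (c • adjoint (an f) ψ) = c • adjoint (an f) (applyBd an u v lam ψ) := by
  rw [applyBd, tsum_congr (fun j => my_term_comm h c f j ψ),
    ← ContinuousLinearMap.map_tsum _ h1]
  rw [ContinuousLinearMap.smul_apply]
  rfl

lemma my_applyBd_zero : applyBd an u v lam (0 : F) = 0 := by
  simp [applyBd]

lemma my_main (h : SatisfiesCAR an) (hon : Orthonormal ℂ (Sum.elim u v))
    (hl0 : ∀ i, 0 ≤ lam i) (hlam2 : Summable (fun k => lam k ^ 2))
    {Ω : F} (hΩ : ∀ f : H, an f Ω = 0) :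
    ∀ M : ℕ, (Summable fun j => ‖an (u j) (PsiM an u v lam Ω M)‖ ^ 2)
      ∧ (∀ k, an (u k) (PsiM an u v lam Ω (M + 1))
          = ((((M : ℝ) + 1) * lam k : ℝ) : ℂ) • adjoint (an (v k)) (PsiM an u v lam Ω M))
      ∧ (∀ k, an (v k) (PsiM an u v lam Ω (M + 1))
          = -(((((M : ℝ) + 1) * lam k : ℝ) : ℂ) • adjoint (an (u k)) (PsiM an u v lam Ω M))) := by
  intro M
  induction M with
  | zero =>
    have hfin : Summable fun j => ‖an (u j) (PsiM an u v lam Ω 0)‖ ^ 2 := by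
      simp only [PsiM, hΩ]
      simpa using summable_zero
    have hs0 : Summable (fun j => (lam j : ℂ) • adjoint (an (u j)) (adjoint (an (v j)) Ω)) :=
      my_summable_Bd h hon hl0 hlam2 Ω (by simpa only [PsiM] using hfin)
    refine ⟨hfin, fun k => ?_, fun k => ?_⟩
    · have hsk : Summable (fun j => (lam j : ℂ) • adjoint (an (u j))
          (adjoint (an (v j)) (an (u k) Ω))) := by
        simp only [hΩ, map_zero, smul_zero]
        exact summable_zero
      show an (u k) (applyBd an u v lam Ω) = _
      rw [my_an_u_applyBd h hon k Ω hs0 hsk, hΩ (u k), my_applyBd_zero, add_zero]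
      congr 1
      · push_cast; ring
    · have hsk : Summable (fun j => (lam j : ℂ) • adjoint (an (u j))
          (adjoint (an (v j)) (an (v k) Ω))) := by
        simp only [hΩ, map_zero, smul_zero]
        exact summable_zero
      show an (v k) (applyBd an u v lam Ω) = _
      rw [my_an_v_applyBd h hon k Ω hs0 hsk, hΩ (v k), my_applyBd_zero, add_zero]
      congr 1
      congr 1
      · push_cast; ring
  | succ M ih =>
    obtain ⟨ihFin, ihU, ihV⟩ := ih
    set ΨM := PsiM an u v lam Ω M with hΨM
    set ΨM1 := PsiM an u v lam Ω (M + 1) with hΨM1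
    have hSM : Summable (fun j => (lam j : ℂ) • adjoint (an (u j)) (adjoint (an (v j)) ΨM)) :=
      my_summable_Bd h hon hl0 hlam2 ΨM ihFin
    have finM1 : Summable fun j => ‖an (u j) ΨM1‖ ^ 2 := by
      refine Summable.of_nonneg_of_le (fun j => sq_nonneg _) (fun j => ?_)
        ((hlam2.mul_left ((((M : ℝ) + 1) ^ 2) * ‖ΨM‖ ^ 2)))
      rw [ihU j, norm_smul]
      have had : ‖adjoint (an (v j)) ΨM‖ ≤ ‖ΨM‖ := by
        have := my_norm_ad_le h (v j) ΨM
        rwa [my_nv hon, one_mul] at this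
      have hc : ‖(((((M : ℝ) + 1) * lam j : ℝ)) : ℂ)‖ = |((M : ℝ) + 1) * lam j| := by
        rw [Complex.norm_real, Real.norm_eq_abs]
      rw [hc]
      have h1 : 0 ≤ ((M : ℝ) + 1) := by positivity
      have h2 : |((M : ℝ) + 1) * lam j| = ((M : ℝ) + 1) * |lam j| := by
        rw [abs_mul, abs_of_nonneg h1]
      rw [h2]
      have h3 : |lam j| = lam j := abs_of_nonneg (hl0 j)
      rw [h3]
      have h4 : ‖adjoint (an (v j)) ΨM‖ ^ 2 ≤ ‖ΨM‖ ^ 2 :=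
        pow_le_pow_left₀ (norm_nonneg _) had 2
      have h5 : (0:ℝ) ≤ ((M:ℝ) + 1) ^ 2 * lam j ^ 2 := by positivity
      calc (((M:ℝ) + 1) * lam j * ‖adjoint (an (v j)) ΨM‖) ^ 2
          = (((M:ℝ) + 1) ^ 2 * lam j ^ 2) * ‖adjoint (an (v j)) ΨM‖ ^ 2 := by ring
        _ ≤ (((M:ℝ) + 1) ^ 2 * lam j ^ 2) * ‖ΨM‖ ^ 2 := mul_le_mul_of_nonneg_left h4 h5
        _ = ((M:ℝ) + 1) ^ 2 * ‖ΨM‖ ^ 2 * lam j ^ 2 := by ring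
    have hSM1 : Summable (fun j => (lam j : ℂ) • adjoint (an (u j)) (adjoint (an (v j)) ΨM1)) :=
      my_summable_Bd h hon hl0 hlam2 ΨM1 finM1
    refine ⟨finM1, fun k => ?_, fun k => ?_⟩
    · set c : ℂ := ((((M : ℝ) + 1) * lam k : ℝ) : ℂ) with hcdef
      have hanu : an (u k) ΨM1 = c • adjoint (an (v k)) ΨM := ihU k
      have h2 : Summable (fun j => (lam j : ℂ) • adjoint (an (u j))
          (adjoint (an (v j)) (an (u k) ΨM1))) := by
        refine Summable.congr (hSM.map ((c • adjoint (an (v k))) : F →L[ℂ] F)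
          (ContinuousLinearMap.continuous _)) fun j => ?_
        rw [hanu]
        exact (my_term_comm h c (v k) j ΨM).symm
      show an (u k) (applyBd an u v lam ΨM1) = _
      rw [my_an_u_applyBd h hon k ΨM1 hSM1 h2, hanu,
        my_applyBd_smul_ad h c (v k) ΨM hSM]
      have : applyBd an u v lam ΨM = ΨM1 := rfl
      rw [this, ← add_smul]
      congr 1
      rw [hcdef]
      push_cast
      ring
    · set c : ℂ := ((((M : ℝ) + 1) * lam k : ℝ) : ℂ) with hcdef
      have hanv : an (v k) ΨM1 = (-c) • adjoint (an (u k)) ΨM := by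
        rw [neg_smul]; exact ihV k
      have h2 : Summable (fun j => (lam j : ℂ) • adjoint (an (u j))
          (adjoint (an (v j)) (an (v k) ΨM1))) := by
        refine Summable.congr (hSM.map (((-c) • adjoint (an (u k))) : F →L[ℂ] F)
          (ContinuousLinearMap.continuous _)) fun j => ?_
        rw [hanv]
        exact (my_term_comm h (-c) (u k) j ΨM).symm
      show an (v k) (applyBd an u v lam ΨM1) = _
      rw [my_an_v_applyBd h hon k ΨM1 hSM1 h2, hanv,
        my_applyBd_smul_ad h (-c) (u k) ΨM hSM]
      have : applyBd an u v lam ΨM = ΨM1 := rfl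
      rw [this]
      simp only [← neg_smul, ← add_smul]
      congr 1
      rw [hcdef]
      push_cast
      ring


end MyAux

/-- **Action of annihilation operators on `Ψ_M`.** For `M ≥ 1` (stated with `M + 1`):
`c_{k,↑} Ψ_{M+1} = (M+1)·λₖ·c*_{k,↓} Ψ_M` and `c_{k,↓} Ψ_{M+1} = -(M+1)·λₖ·c*_{k,↑} Ψ_M`. -/
theorem annihilation_on_PsiM
    {H F T : Type*} [NormedAddCommGroup H] [InnerProductSpace ℂ H] [CompleteSpace H]
    [NormedAddCommGroup F] [InnerProductSpace ℂ F] [CompleteSpace F]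
    [NormedAddCommGroup T] [InnerProductSpace ℂ T] [CompleteSpace T]
    (an : H → F →L[ℂ] F) (hCAR : SatisfiesCAR an)
    (tp : H →ₗ[ℂ] H →ₗ[ℂ] T) (htp : IsHilbertTensorProduct tp)
    (u v : ℕ → H) (lam : ℕ → ℝ) (Φ : T) (hΦnorm : ‖Φ‖ = 1)
    (hΦ : CanonicalWedgeForm tp u v lam Φ)
    (Ω : F) (hΩ : IsVacuum an Ω) :
    ∀ (M k : ℕ),
      an (u k) (PsiM an u v lam Ω (M + 1)) =
          ((((M : ℝ) + 1) * lam k : ℝ) : ℂ) • adjoint (an (v k)) (PsiM an u v lam Ω M) ∧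
        an (v k) (PsiM an u v lam Ω (M + 1)) =
          -(((((M : ℝ) + 1) * lam k : ℝ) : ℂ) • adjoint (an (u k)) (PsiM an u v lam Ω M)) := by
  obtain ⟨hon, hspan, hl0, hsum1, hrep⟩ := hΦ
  have hlam2 : Summable fun k => lam k ^ 2 := by
    by_contra hns
    rw [tsum_eq_zero_of_not_summable hns] at hsum1
    norm_num at hsum1
  intro M k
  obtain ⟨_, hU, hV⟩ := my_main hCAR hon hl0 hlam2 hΩ.2 M
  exact ⟨hU k, hV k⟩
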